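/- Let G be a groupoid, C₁ its set of morphisms and C₂ its set of composable pairs {(y, x) : dom y = cod x}, with m(y, x) = y∘x. Define θ(y, x) = (y⁻¹, y∘x) and φ(y, x) = (y∘x, x⁻¹). Then θ and φ are well-defined maps C₂ → C₂ satisfying θ∘θ = id, φ∘φ = id and θ∘φ∘θ = φ∘θ∘φ; that is, (θ, φ, m : C₂ → C₁) is an involutive-2-link. -/

import Mathlib

open CategoryTheory

universe u v

/-- The set of morphisms of a groupoid `G`, bundled with their (co)domains. -/
structure GMor (G : Type u) [Groupoid.{v} G] : Type max u v where
  src : G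
  tgt : G
  hom : src ⟶ tgt

variable {G : Type u} [Groupoid.{v} G]

/-- Composable pairs `(y, x)` with `dom y = cod x`. -/
def GPairs (G : Type u) [Groupoid.{v} G] : Type max u v :=
  {p : GMor G × GMor G // p.1.src = p.2.tgt}

/-- Composition `m(y, x) = y ∘ x` of a composable pair. -/
def mG : GPairs G → GMor G :=
  fun p => ⟨p.1.2.src, p.1.1.tgt, p.1.2.hom ≫ eqToHom p.2.symm ≫ p.1.1.hom⟩

/-- The inverse of a morphism. -/
def invG : GMor G → GMor G :=
  fun a => ⟨a.tgt, a.src, Groupoid.inv a.hom⟩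

/-- `θ(y, x) = (y⁻¹, y ∘ x)`. -/
def θG : GPairs G → GPairs G := fun p => ⟨(invG p.1.1, mG p), rfl⟩

/-- `φ(y, x) = (y ∘ x, x⁻¹)`. -/
def φG : GPairs G → GPairs G := fun p => ⟨(mG p, invG p.1.2), rfl⟩

/-- For any groupoid `G`, the maps `θ(y, x) = (y⁻¹, y ∘ x)` and
`φ(y, x) = (y ∘ x, x⁻¹)` are well-defined involutions on the object of
composable pairs, satisfying `θφθ = φθφ`; that is, `(θ, φ, m : C₂ → C₁)`
is an involutive-2-link. -/
theorem groupoid_involutive_2_link (G : Type u) [Groupoid.{v} G] :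
    (θG (G := G)) ∘ θG = id ∧
    (φG (G := G)) ∘ φG = id ∧
    (θG (G := G)) ∘ φG ∘ θG = φG ∘ θG ∘ φG := by
  refine ⟨?_, ?_, ?_⟩ <;>
  · funext p
    simp only [Function.comp_apply, id_eq]
    obtain ⟨⟨⟨ys, yt, yh⟩, ⟨xs, xt, xh⟩⟩, h⟩ := p
    dsimp at h
    subst h
    apply Subtype.ext
    simp [θG, φG, mG, invG, GMor.mk.injEq] <;> erw [eqToHom_refl, Category.id_comp, IsIso.hom_inv_id_assoc]
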